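/- Let A ∈ ℝ^{n×n}, B ∈ ℝ^{n×m}, Q ∈ ℝ^{n×n} symmetric, R ∈ ℝ^{m×m} symmetric positive definite, and W ∈ ℝ^{n×n} symmetric. Suppose P* ∈ ℝ^{n×n} is symmetric and satisfies the continuous-time algebraic Riccati equation AᵀP* + P*A + Q − P*BR⁻¹BᵀP* = 0, and set K* = −R⁻¹BᵀP*. Let K ∈ ℝ^{m×n} and let X ∈ ℝ^{n×n} be symmetric and satisfy the continuous-time Lyapunov equation (A+BK)X + X(A+BK)ᵀ + W = 0. Then the completion-of-squares identity holds: trace((Q + KᵀRK)X) = trace(P*W) + trace((K−K*)ᵀR(K−K*)X). In particular, if X is positive semidefinite, then trace((Q+KᵀRK)X) − trace(P*W) ≥ trace(R(K−K*)X(K−K*)ᵀ) ≥ 0. -/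

import Mathlib

open Matrix

noncomputable section

private lemma lqr_trace_nonneg_of_psd {k : ℕ} {M : Matrix (Fin k) (Fin k) ℝ}
    (hM : M.PosSemidef) : 0 ≤ M.trace := by
  rw [Matrix.trace]
  apply Finset.sum_nonneg
  intro i _
  exact hM.diag_nonneg

private lemma lqr_trace_mul_nonneg {k : ℕ} {M N : Matrix (Fin k) (Fin k) ℝ}
    (hM : M.PosSemidef) (hN : N.PosSemidef) : 0 ≤ (M * N).trace := by
  obtain ⟨C, hC⟩ : ∃ C : Matrix (Fin k) (Fin k) ℝ, N = Cᴴ * C := by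
    open scoped MatrixOrder in exact CStarAlgebra.nonneg_iff_eq_star_mul_self.mp hN.nonneg
  have h1 : (M * N).trace = (C * M * Cᴴ).trace := by
    rw [hC, Matrix.trace_mul_comm]
    exact (Matrix.trace_mul_cycle C M Cᴴ).symm
  rw [h1]
  exact lqr_trace_nonneg_of_psd (hM.mul_mul_conjTranspose_same C)

/-- Completion-of-squares identity for the continuous-time LQR, and the resulting lower
bound on the optimality gap. -/
theorem stmt_4 {n m : ℕ}
    (A : Matrix (Fin n) (Fin n) ℝ) (B : Matrix (Fin n) (Fin m) ℝ)
    (Q W Pstar X : Matrix (Fin n) (Fin n) ℝ)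
    (R : Matrix (Fin m) (Fin m) ℝ)
    (K Kstar : Matrix (Fin m) (Fin n) ℝ)
    (hQ : Q.IsHermitian) (hR : R.PosDef) (hW : W.IsHermitian)
    (hPsSym : Pstar.IsHermitian)
    (hRic : Aᵀ * Pstar + Pstar * A + Q - Pstar * B * R⁻¹ * Bᵀ * Pstar = 0)
    (hKs : Kstar = -(R⁻¹ * Bᵀ * Pstar))
    (hX : X.IsHermitian)
    (hXEq : (A + B * K) * X + X * (A + B * K)ᵀ + W = 0) :
    Matrix.trace ((Q + Kᵀ * R * K) * X) =
        Matrix.trace (Pstar * W) +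
          Matrix.trace ((K - Kstar)ᵀ * R * (K - Kstar) * X) ∧
      (X.PosSemidef →
        Matrix.trace (R * (K - Kstar) * X * (K - Kstar)ᵀ) ≤
            Matrix.trace ((Q + Kᵀ * R * K) * X) - Matrix.trace (Pstar * W) ∧
          0 ≤ Matrix.trace (R * (K - Kstar) * X * (K - Kstar)ᵀ)) := by
  subst hKs
  have hdet : IsUnit R.det := isUnit_iff_ne_zero.mpr (ne_of_gt hR.det_pos)
  have hRR : R * R⁻¹ = 1 := Matrix.mul_nonsing_inv R hdet
  have hRiR : R⁻¹ * R = 1 := Matrix.nonsing_inv_mul R hdet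
  have hPt : Pstarᵀ = Pstar := by
    rw [← conjTranspose_eq_transpose_of_trivial]; exact hPsSym
  have hRt : Rᵀ = R := by
    rw [← conjTranspose_eq_transpose_of_trivial]; exact hR.isHermitian
  have hRit : (R⁻¹)ᵀ = R⁻¹ := by rw [Matrix.transpose_nonsing_inv, hRt]
  have hc1 : ∀ Z : Matrix (Fin m) (Fin n) ℝ, R * (R⁻¹ * Z) = Z := fun Z => by
    rw [← Matrix.mul_assoc, hRR, Matrix.one_mul]
  have hc2 : ∀ Z : Matrix (Fin m) (Fin n) ℝ, R⁻¹ * (R * Z) = Z := fun Z => by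
    rw [← Matrix.mul_assoc, hRiR, Matrix.one_mul]
  have hQ' : Q = Pstar * B * R⁻¹ * Bᵀ * Pstar - Aᵀ * Pstar - Pstar * A := by
    linear_combination (norm := abel) hRic
  have hM : Q + Kᵀ * R * K =
      (K - (-(R⁻¹ * Bᵀ * Pstar)))ᵀ * R * (K - (-(R⁻¹ * Bᵀ * Pstar)))
        - ((A + B * K)ᵀ * Pstar + Pstar * (A + B * K)) := by
    rw [hQ']
    simp only [sub_neg_eq_add, transpose_add, transpose_mul, transpose_transpose, hPt, hRit,
      Matrix.add_mul, Matrix.mul_add, Matrix.mul_assoc, hc1, hc2]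
    abel
  have hW' : W = -((A + B * K) * X + X * (A + B * K)ᵀ) :=
    eq_neg_of_add_eq_zero_right hXEq
  have hcyc : Matrix.trace (Pstar * (X * (A + B * K)ᵀ)) =
      Matrix.trace ((A + B * K)ᵀ * (Pstar * X)) := by
    rw [← Matrix.mul_assoc, Matrix.trace_mul_comm]
  have key : Matrix.trace ((Q + Kᵀ * R * K) * X) =
      Matrix.trace (Pstar * W) +
        Matrix.trace ((K - (-(R⁻¹ * Bᵀ * Pstar)))ᵀ * R * (K - (-(R⁻¹ * Bᵀ * Pstar))) * X) := by
    rw [hM, hW']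
    simp only [Matrix.sub_mul, Matrix.add_mul, Matrix.mul_neg, Matrix.mul_add,
      Matrix.trace_sub, Matrix.trace_add, Matrix.trace_neg, Matrix.mul_assoc]
    rw [hcyc]
    ring
  refine ⟨key, fun hXpsd => ?_⟩
  have hGpsd : ((K - (-(R⁻¹ * Bᵀ * Pstar)))ᵀ * R * (K - (-(R⁻¹ * Bᵀ * Pstar)))).PosSemidef := by
    have := hR.posSemidef.conjTranspose_mul_mul_same (K - (-(R⁻¹ * Bᵀ * Pstar)))
    rwa [conjTranspose_eq_transpose_of_trivial] at this
  have h0 : 0 ≤ Matrix.trace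
      ((K - (-(R⁻¹ * Bᵀ * Pstar)))ᵀ * R * (K - (-(R⁻¹ * Bᵀ * Pstar))) * X) :=
    lqr_trace_mul_nonneg hGpsd hXpsd
  have heq2 : Matrix.trace (R * (K - (-(R⁻¹ * Bᵀ * Pstar))) * X * (K - (-(R⁻¹ * Bᵀ * Pstar)))ᵀ) =
      Matrix.trace ((K - (-(R⁻¹ * Bᵀ * Pstar)))ᵀ * R * (K - (-(R⁻¹ * Bᵀ * Pstar))) * X) := by
    rw [Matrix.trace_mul_comm]
    simp only [Matrix.mul_assoc]
  constructor
  · rw [heq2, key]; ring_nf; exact le_refl _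
  · rw [heq2]; exact h0
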